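/- Let V be a vector space over ℝ, let k ≥ 1, and let B_1,…,B_k and A_1,…,A_k be linear subspaces of V such that B_i ⊆ A_i and B_{i+1} ⊆ A_i for every i (indices taken cyclically modulo k). Then the linear map φ : (V/B_1) ⊕ ⋯ ⊕ (V/B_k) → (V/A_1) ⊕ ⋯ ⊕ (V/A_k) given by φ(v_1 + B_1, …, v_k + B_k) = (v_2 − v_1 + A_1, v_3 − v_2 + A_2, …, v_1 − v_k + A_k) is well defined, and its cokernel ((V/A_1) ⊕ ⋯ ⊕ (V/A_k)) / im(φ) is isomorphic as an ℝ-vector space to V/(A_1 + A_2 + ⋯ + A_k). -/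
import Mathlib


/-- Let `V` be an ℝ-vector space, `k ≥ 1`, and `B i ⊆ A i`,
`B (i+1) ⊆ A i` (indices cyclic mod `k`) subspaces of `V`. Then the map
`φ : ⊕ V/Bᵢ → ⊕ V/Aᵢ`, `φ(v₁+B₁,…,v_k+B_k) = (v₂−v₁+A₁, …, v₁−v_k+A_k)`
is well defined and its cokernel is isomorphic to `V/(A₁ + ⋯ + A_k)`. -/
theorem stmt0 {V : Type*} [AddCommGroup V] [Module ℝ V] (k : ℕ) [NeZero k]
    (B A : Fin k → Submodule ℝ V)
    (hB : ∀ i, B i ≤ A i) (hB' : ∀ i : Fin k, B (i + 1) ≤ A i) :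
    ∃ φ : ((i : Fin k) → V ⧸ B i) →ₗ[ℝ] ((i : Fin k) → V ⧸ A i),
      (∀ v : Fin k → V,
        φ (fun i => Submodule.Quotient.mk (v i)) =
          fun i => Submodule.Quotient.mk (v (i + 1) - v i)) ∧
      Nonempty ((((i : Fin k) → V ⧸ A i) ⧸ LinearMap.range φ) ≃ₗ[ℝ]
        (V ⧸ ⨆ i, A i)) := by
  classical
  obtain ⟨n, rfl⟩ : ∃ n, k = n + 1 := ⟨k - 1, (Nat.succ_pred_eq_of_ne_zero (NeZero.ne k)).symm⟩
  set φ : ((i : Fin (n+1)) → V ⧸ B i) →ₗ[ℝ] ((i : Fin (n+1)) → V ⧸ A i) :=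
    LinearMap.pi (fun i =>
      (Submodule.mapQ (B (i+1)) (A i) LinearMap.id (hB' i)).comp (LinearMap.proj (i+1))
      - (Submodule.mapQ (B i) (A i) LinearMap.id (hB i)).comp (LinearMap.proj i)) with hφ
  have hφapp : ∀ v : Fin (n+1) → V, φ (fun i => Submodule.Quotient.mk (v i)) =
      fun i => Submodule.Quotient.mk (v (i + 1) - v i) := by
    intro v; funext i
    simp [hφ, Submodule.mapQ_apply, Submodule.Quotient.mk_sub]
  refine ⟨φ, hφapp, ?_⟩
  set ψ : ((i : Fin (n+1)) → V ⧸ A i) →ₗ[ℝ] (V ⧸ ⨆ i, A i) :=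
    ∑ i : Fin (n+1),
      (Submodule.mapQ (A i) (⨆ i, A i) LinearMap.id (le_iSup A i)).comp (LinearMap.proj i)
    with hψ
  have hψapp : ∀ v : Fin (n+1) → V, ψ (fun i => Submodule.Quotient.mk (v i)) =
      Submodule.Quotient.mk (∑ i, v i) := by
    intro v
    rw [hψ, LinearMap.sum_apply]
    simp only [LinearMap.comp_apply, LinearMap.proj_apply, Submodule.mapQ_apply,
      LinearMap.id_apply]
    exact (map_sum (Submodule.mkQ _) v Finset.univ).symm
  have hsurj : Function.Surjective ψ := by
    intro z
    obtain ⟨v, rfl⟩ := Submodule.Quotient.mk_surjective _ z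
    refine ⟨fun i => Submodule.Quotient.mk (if i = 0 then v else 0), ?_⟩
    rw [hψapp]
    simp
  have hker : LinearMap.range φ = LinearMap.ker ψ := by
    apply le_antisymm
    · rintro x ⟨y, rfl⟩
      obtain ⟨v, rfl⟩ : ∃ v : Fin (n+1) → V, (fun i => Submodule.Quotient.mk (v i)) = y := by
        choose v hv using fun i => Submodule.Quotient.mk_surjective (B i) (y i)
        exact ⟨v, funext hv⟩
      rw [LinearMap.mem_ker, hφapp, hψapp]
      have h1 : ∑ i : Fin (n+1), v (i + 1) = ∑ i : Fin (n+1), v i :=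
        Fintype.sum_equiv (Equiv.addRight 1) (fun i => v (i + 1)) v (fun i => rfl)
      rw [Finset.sum_sub_distrib, h1, sub_self, Submodule.Quotient.mk_zero]
    · intro x hx
      choose w hw using fun i => Submodule.Quotient.mk_surjective (A i) (x i)
      rw [LinearMap.mem_ker, show x = fun i => Submodule.Quotient.mk (w i) from
        (funext fun i => (hw i).symm), hψapp, Submodule.Quotient.mk_eq_zero] at hx
      obtain ⟨f, hf, hfsum⟩ := (Submodule.mem_iSup_iff_exists_finsupp _ _).mp hx
      set u : Fin (n+1) → V := fun i => w i - f i with hu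
      have husum : ∑ i, u i = 0 := by
        have hfs : (f.sum fun _ m => m) = ∑ i, f i := Finsupp.sum_fintype _ _ (fun i => rfl)
        rw [hu]
        rw [Finset.sum_sub_distrib, ← hfs, hfsum, sub_self]
      have hxu : ∀ i, Submodule.Quotient.mk (u i) = x i := by
        intro i
        rw [hu, ← hw i]
        exact (Submodule.Quotient.eq _).mpr (by simpa using neg_mem (hf i))
      set v : Fin (n+1) → V := fun i =>
        ∑ j ∈ Finset.univ.filter (fun j : Fin (n+1) => (j : ℕ) < (i : ℕ)), u j with hv
      have hv0 : v 0 = 0 := by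
        rw [hv]
        exact Finset.sum_eq_zero (by intro j hj; simp at hj)
      have hvdiff : ∀ i, v (i + 1) - v i = u i := by
        intro i
        rcases eq_or_ne i (Fin.last n) with rfl | hi
        · have h1 : Fin.last n + 1 = 0 := by ext; simp [Fin.add_def]
          have h2 : v (Fin.last n) = ∑ j ∈ Finset.univ.erase (Fin.last n), u j := by
            rw [hv]
            apply Finset.sum_congr _ (fun _ _ => rfl)
            ext j
            simp only [Finset.mem_filter, Finset.mem_univ, true_and, Finset.mem_erase,
              Fin.val_last, ne_eq, Fin.ext_iff, and_true]
            exact ⟨fun h => by omega, fun h => lt_of_le_of_ne (Nat.lt_succ_iff.mp j.isLt) h⟩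
          have h3 : u (Fin.last n) + ∑ j ∈ Finset.univ.erase (Fin.last n), u j = 0 := by
            rw [← Finset.add_sum_erase _ _ (Finset.mem_univ (Fin.last n))] at husum
            exact husum
          rw [h1, hv0, h2, zero_sub, neg_eq_iff_add_eq_zero, add_comm]
          exact h3
        · have hlt : i < Fin.last n := Fin.lt_last_iff_ne_last.mpr hi
          have hval : ((i + 1 : Fin (n+1)) : ℕ) = (i : ℕ) + 1 := Fin.val_add_one_of_lt hlt
          have hset : Finset.univ.filter (fun j : Fin (n+1) => (j : ℕ) < (i : ℕ) + 1)
              = insert i (Finset.univ.filter (fun j : Fin (n+1) => (j : ℕ) < (i : ℕ))) := by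
            ext j
            simp only [Finset.mem_filter, Finset.mem_univ, true_and, Finset.mem_insert,
              Fin.ext_iff]
            omega
          have : v (i + 1) = u i + v i := by
            rw [hv]
            simp only [hval, hset]
            rw [Finset.sum_insert (by simp)]
          rw [this, add_sub_cancel_right]
      refine ⟨fun i => Submodule.Quotient.mk (v i), ?_⟩
      rw [hφapp]
      funext i
      rw [hvdiff i, hxu i]
  rw [hker]
  exact ⟨ψ.quotKerEquivOfSurjective hsurj⟩
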